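/- arXiv:1412.6899 — 3 statements merged into one kernel-verified Lean document; each statement's English description precedes it below -/
import Mathlib

section
/- Let S/R be relative Frobenius of rank n and R → R' any ring homomorphism. Then (R' ⊗_R S)/R' is relative Frobenius of rank n. -/
open scoped TensorProduct

/-- For commutative rings `R → S`, the pair `S/R` is **relative Frobenius of rank `n`** if
`S` is free of rank `n` as an `R`-module and `Hom_R(S,R) ≅ S` as `S`-modules; the latter is
phrased as the existence of `l : S →ₗ[R] R` for which `s ↦ (x ↦ l (s * x))` is bijective. -/
def IsRelativeFrobenius (R S : Type*) [CommRing R] [CommRing S] [Algebra R S]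
    (n : ℕ) : Prop :=
  Nonempty (Module.Basis (Fin n) R S) ∧
    ∃ l : S →ₗ[R] R, Function.Bijective fun s : S => l ∘ₗ LinearMap.mul R S s

/-- If `S/R` is relative Frobenius of rank `n` and `R → R'` is any ring homomorphism, then
`(R' ⊗_R S)/R'` is relative Frobenius of rank `n`. -/
theorem isRelativeFrobenius_baseChange (R S R' : Type*) [CommRing R] [CommRing S]
    [Algebra R S] [CommRing R'] [Algebra R R'] (n : ℕ)
    (h : IsRelativeFrobenius R S n) :
    IsRelativeFrobenius R' (R' ⊗[R] S) n := by
  obtain ⟨⟨b⟩, l, hl⟩ := h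
  -- the base-changed basis
  let b' : Module.Basis (Fin n) R' (R' ⊗[R] S) := Algebra.TensorProduct.basis R' b
  refine ⟨⟨b'⟩, ?_⟩
  -- the base-changed functional
  let l' : R' ⊗[R] S →ₗ[R'] R' :=
    (TensorProduct.AlgebraTensorModule.rid R R' R').toLinearMap ∘ₗ l.baseChange R'
  refine ⟨l', ?_⟩
  -- bundle the two "multiplication-pairing" maps as linear maps
  let Φ : S →ₗ[R] Module.Dual R S :=
    (LinearMap.llcomp R S S R l) ∘ₗ (LinearMap.mul R S)
  let Φ' : R' ⊗[R] S →ₗ[R'] Module.Dual R' (R' ⊗[R] S) :=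
    (LinearMap.llcomp R' (R' ⊗[R] S) (R' ⊗[R] S) R' l') ∘ₗ (LinearMap.mul R' (R' ⊗[R] S))
  have hΦ : Function.Bijective Φ := hl
  -- The matrix of `Φ` in the bases `b`, `b.dualBasis` is invertible.
  have hunit : IsUnit (LinearMap.toMatrix b b.dualBasis Φ).det := by
    exact (LinearEquiv.ofBijective Φ hΦ).isUnit_det b b.dualBasis
  -- The matrix of `Φ'` is the image of the matrix of `Φ` under `algebraMap R R'`.
  have key : LinearMap.toMatrix b' b'.dualBasis Φ' =
      (LinearMap.toMatrix b b.dualBasis Φ).map (algebraMap R R') := by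
    ext i j
    rw [LinearMap.toMatrix_apply, Module.Basis.dualBasis_repr, Matrix.map_apply,
      LinearMap.toMatrix_apply, Module.Basis.dualBasis_repr]
    show l' (b' j * b' i) = algebraMap R R' (l (b j * b i))
    have hb : ∀ k, b' k = (1 : R') ⊗ₜ[R] b k := fun k =>
      Algebra.TensorProduct.basis_apply b k
    rw [hb, hb, Algebra.TensorProduct.tmul_mul_tmul, one_mul]
    show (TensorProduct.AlgebraTensorModule.rid R R' R')
      (l.baseChange R' ((1 : R') ⊗ₜ[R] (b j * b i))) = _
    rw [LinearMap.baseChange_tmul, TensorProduct.AlgebraTensorModule.rid_tmul,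
      Algebra.smul_def, mul_one]
  have hunit' : IsUnit (LinearMap.toMatrix b' b'.dualBasis Φ').det := by
    rw [key, ← RingHom.mapMatrix_apply, ← RingHom.map_det]
    exact hunit.map (algebraMap R R')
  have hcoe : ((LinearEquiv.ofIsUnitDet hunit' :
      R' ⊗[R] S ≃ₗ[R'] Module.Dual R' (R' ⊗[R] S)) :
      R' ⊗[R] S →ₗ[R'] Module.Dual R' (R' ⊗[R] S)) = Φ' :=
    LinearEquiv.coe_ofIsUnitDet hunit'
  have hb : Function.Bijective (LinearEquiv.ofIsUnitDet hunit' :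
      R' ⊗[R] S ≃ₗ[R'] Module.Dual R' (R' ⊗[R] S)) :=
    (LinearEquiv.ofIsUnitDet hunit').bijective
  rw [show (fun s : R' ⊗[R] S => l' ∘ₗ LinearMap.mul R' (R' ⊗[R] S) s) = ⇑Φ' from rfl, ← hcoe]
  exact hb
end

section
/- Let R̃ = ℤ[a_1,b_1,c_1,d_1,a_2,b_2,c_2,d_2] localized at f = 1 − d_1 d_2, and let S̃ = R̃[s,t]/(a_1 + b_1 s + c_1 t + d_1 st − s^2, a_2 + b_2 s + c_2 t + d_2 st − t^2). Then S̃ is a free R̃-module of rank 4 with basis (1, s, t, st), and letting λ : S̃ → R̃ be projection onto the coefficient of st, the Gram matrix (λ(e_i e_j)) has determinant 1 − d_1 d_2, which is invertible in R̃; hence S̃/R̃ is relative Frobenius of rank 4. -/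
set_option synthInstance.maxHeartbeats 1000000
set_option maxHeartbeats 1000000

noncomputable section

/-- `A = ℤ[a₁,b₁,c₁,d₁,a₂,b₂,c₂,d₂]`, with the variables indexed by `Fin 8` in this order:
`a₁ = X 0, b₁ = X 1, c₁ = X 2, d₁ = X 3, a₂ = X 4, b₂ = X 5, c₂ = X 6, d₂ = X 7`. -/
abbrev ZPoly := MvPolynomial (Fin 8) ℤ

/-- `f = 1 − d₁d₂`. -/
abbrev fElt : ZPoly := 1 - MvPolynomial.X 3 * MvPolynomial.X 7

variable (Rt : Type) [CommRing Rt] [Algebra ZPoly Rt]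

/-- The ideal `(a₁ + b₁s + c₁t + d₁st − s², a₂ + b₂s + c₂t + d₂st − t²)` of `R̃[s,t]`,
with `s = X 0`, `t = X 1`. -/
abbrev StIdeal : Ideal (MvPolynomial (Fin 2) Rt) :=
  Ideal.span
    { (MvPolynomial.C (algebraMap ZPoly Rt (MvPolynomial.X 0)) +
        MvPolynomial.C (algebraMap ZPoly Rt (MvPolynomial.X 1)) * MvPolynomial.X 0 +
        MvPolynomial.C (algebraMap ZPoly Rt (MvPolynomial.X 2)) * MvPolynomial.X 1 +
        MvPolynomial.C (algebraMap ZPoly Rt (MvPolynomial.X 3)) *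
          (MvPolynomial.X 0 * MvPolynomial.X 1) -
        (MvPolynomial.X 0) ^ 2 : MvPolynomial (Fin 2) Rt),
      (MvPolynomial.C (algebraMap ZPoly Rt (MvPolynomial.X 4)) +
        MvPolynomial.C (algebraMap ZPoly Rt (MvPolynomial.X 5)) * MvPolynomial.X 0 +
        MvPolynomial.C (algebraMap ZPoly Rt (MvPolynomial.X 6)) * MvPolynomial.X 1 +
        MvPolynomial.C (algebraMap ZPoly Rt (MvPolynomial.X 7)) *
          (MvPolynomial.X 0 * MvPolynomial.X 1) -
        (MvPolynomial.X 1) ^ 2 : MvPolynomial (Fin 2) Rt) }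

/-- `S̃ = R̃[s,t]/(a₁ + b₁s + c₁t + d₁st − s², a₂ + b₂s + c₂t + d₂st − t²)`. -/
abbrev St := MvPolynomial (Fin 2) Rt ⧸ StIdeal Rt

section DevHelper

variable {R : Type*} [CommRing R]

def vrec (a1 b1 c1 d1 a2 b2 c2 d2 ee : R) : ℕ → ℕ → Fin 4 → R
  | 0, 0 => Pi.single 0 1
  | 1, 0 => Pi.single 1 1
  | 0, 1 => Pi.single 2 1
  | 1, 1 => Pi.single 3 1
  | 0, n+2 => a2 • vrec a1 b1 c1 d1 a2 b2 c2 d2 ee 0 n + b2 • vrec a1 b1 c1 d1 a2 b2 c2 d2 ee 1 n + c2 • vrec a1 b1 c1 d1 a2 b2 c2 d2 ee 0 (n+1) + d2 • vrec a1 b1 c1 d1 a2 b2 c2 d2 ee 1 (n+1)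
  | 1, n+2 => ee • (a2 • vrec a1 b1 c1 d1 a2 b2 c2 d2 ee 1 n + b2 • (a1 • vrec a1 b1 c1 d1 a2 b2 c2 d2 ee 0 n + b1 • vrec a1 b1 c1 d1 a2 b2 c2 d2 ee 1 n + c1 • vrec a1 b1 c1 d1 a2 b2 c2 d2 ee 0 (n+1) + d1 • vrec a1 b1 c1 d1 a2 b2 c2 d2 ee 1 (n+1)) + c2 • vrec a1 b1 c1 d1 a2 b2 c2 d2 ee 1 (n+1) + d2 • (a1 • vrec a1 b1 c1 d1 a2 b2 c2 d2 ee 0 (n+1) + b1 • vrec a1 b1 c1 d1 a2 b2 c2 d2 ee 1 (n+1) + c1 • vrec a1 b1 c1 d1 a2 b2 c2 d2 ee 0 (n+2)))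
  | m+2, n => a1 • vrec a1 b1 c1 d1 a2 b2 c2 d2 ee m n + b1 • vrec a1 b1 c1 d1 a2 b2 c2 d2 ee (m+1) n + c1 • vrec a1 b1 c1 d1 a2 b2 c2 d2 ee m (n+1) + d1 • vrec a1 b1 c1 d1 a2 b2 c2 d2 ee (m+1) (n+1)
  termination_by m n => if m ≤ 1 then m + 2*n else 3*m + 2*n
  decreasing_by all_goals (simp_wf; try split_ifs) <;> omega

variable (a1 b1 c1 d1 a2 b2 c2 d2 ee : R)

local notation "V" => vrec a1 b1 c1 d1 a2 b2 c2 d2 ee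

lemma relA (m n : ℕ) : V (m+2) n = a1 • V m n + b1 • V (m+1) n + c1 • V m (n+1) + d1 • V (m+1) (n+1) := by
  rw [vrec]

lemma relB (hE : ee * (1 - d1*d2) = 1) (m n : ℕ) :
    V m (n+2) = a2 • V m n + b2 • V (m+1) n + c2 • V m (n+1) + d2 • V (m+1) (n+1) := by
  have A := relA a1 b1 c1 d1 a2 b2 c2 d2 ee
  induction m using Nat.strong_induction_on generalizing n with
  | _ m ih =>
    match m with
    | 0 => rw [vrec]
    | 1 =>
      have h2 : (1 - d1*d2) • V 1 (n+2) =
          a2 • V 1 n + b2 • (a1 • V 0 n + b1 • V 1 n + c1 • V 0 (n+1) + d1 • V 1 (n+1)) +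
            c2 • V 1 (n+1) +
            d2 • (a1 • V 0 (n+1) + b1 • V 1 (n+1) + c1 • V 0 (n+2)) := by
        conv_lhs => rw [vrec]
        rw [smul_smul, mul_comm (1 - d1*d2) ee, hE, one_smul]
      have h3 : V 1 (n+2) =
          (a2 • V 1 n + b2 • (a1 • V 0 n + b1 • V 1 n + c1 • V 0 (n+1) + d1 • V 1 (n+1)) +
            c2 • V 1 (n+1) +
            d2 • (a1 • V 0 (n+1) + b1 • V 1 (n+1) + c1 • V 0 (n+2))) + (d2*d1) • V 1 (n+2) := by
        rw [← h2]; module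
      rw [show (1:ℕ)+1 = 2 from rfl, A 0 n, A 0 (n+1), show (0:ℕ)+1 = 1 from rfl,
        show n+1+1 = n+2 from rfl]
      conv_lhs => rw [h3]
      module
    | (m+2) =>
      rw [show m+2+1 = (m+1)+2 from rfl, A m (n+2),
        show n+2+1 = (n+1)+2 from rfl,
        ih m (by omega) n, ih (m+1) (by omega) n, ih m (by omega) (n+1), ih (m+1) (by omega) (n+1),
        A (m+1) n, A (m+1) (n+1), show m+1+1 = m+2 from rfl, A m n, A m (n+1)]
      module

open MvPolynomial

local notation "P2" => MvPolynomial (Fin 2) R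

def phi : MvPolynomial (Fin 2) R →ₗ[R] (Fin 4 → R) :=
  (MvPolynomial.basisMonomials (Fin 2) R).constr R
    (fun d => vrec a1 b1 c1 d1 a2 b2 c2 d2 ee (d 0) (d 1))

local notation "Φ" => phi a1 b1 c1 d1 a2 b2 c2 d2 ee

lemma phi_monomial (d : Fin 2 →₀ ℕ) (c : R) :
    Φ (monomial d c) = c • V (d 0) (d 1) := by
  have h : (monomial d c : P2) = c • (MvPolynomial.basisMonomials (Fin 2) R) d := by
    simp [MvPolynomial.coe_basisMonomials, smul_monomial]
  rw [h, map_smul, phi, Module.Basis.constr_basis]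

def gone : MvPolynomial (Fin 2) R := C a1 + C b1 * X 0 + C c1 * X 1 + C d1 * (X 0 * X 1) - X 0^2
def gtwo : MvPolynomial (Fin 2) R := C a2 + C b2 * X 0 + C c2 * X 1 + C d2 * (X 0 * X 1) - X 1^2

local notation "G₁" => gone a1 b1 c1 d1
local notation "G₂" => gtwo a2 b2 c2 d2

lemma mono_mul_g1 (u : Fin 2 →₀ ℕ) (c : R) :
    monomial u c * G₁ =
      monomial u (c*a1) + monomial (u + Finsupp.single 0 1) (c*b1) +
        monomial (u + Finsupp.single 1 1) (c*c1) +
        monomial (u + (Finsupp.single 0 1 + Finsupp.single 1 1)) (c*d1) -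
        monomial (u + Finsupp.single 0 2) c := by
  have hX0 : (X 0 : MvPolynomial (Fin 2) R) = monomial (Finsupp.single 0 1) 1 := rfl
  have hX1 : (X 1 : MvPolynomial (Fin 2) R) = monomial (Finsupp.single 1 1) 1 := rfl
  have hC : ∀ r : R, (C r : MvPolynomial (Fin 2) R) = monomial 0 r := fun r => rfl
  rw [gone, X_pow_eq_monomial]
  simp only [mul_add, mul_sub, hX0, hX1, hC, monomial_mul, mul_one, add_zero, zero_add]

lemma mono_mul_g2 (u : Fin 2 →₀ ℕ) (c : R) :
    monomial u c * G₂ =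
      monomial u (c*a2) + monomial (u + Finsupp.single 0 1) (c*b2) +
        monomial (u + Finsupp.single 1 1) (c*c2) +
        monomial (u + (Finsupp.single 0 1 + Finsupp.single 1 1)) (c*d2) -
        monomial (u + Finsupp.single 1 2) c := by
  have hX0 : (X 0 : MvPolynomial (Fin 2) R) = monomial (Finsupp.single 0 1) 1 := rfl
  have hX1 : (X 1 : MvPolynomial (Fin 2) R) = monomial (Finsupp.single 1 1) 1 := rfl
  have hC : ∀ r : R, (C r : MvPolynomial (Fin 2) R) = monomial 0 r := fun r => rfl
  rw [gtwo, X_pow_eq_monomial]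
  simp only [mul_add, mul_sub, hX0, hX1, hC, monomial_mul, mul_one, add_zero, zero_add]

lemma phi_mul_g1 (q : MvPolynomial (Fin 2) R) : Φ (q * G₁) = 0 := by
  have A := relA a1 b1 c1 d1 a2 b2 c2 d2 ee
  induction q using MvPolynomial.induction_on' with
  | add p q hp hq => rw [add_mul, map_add, hp, hq, add_zero]
  | monomial u c =>
    rw [mono_mul_g1, map_sub, map_add, map_add, map_add,
      phi_monomial, phi_monomial, phi_monomial, phi_monomial, phi_monomial]
    simp only [Finsupp.add_apply, Finsupp.single_apply]
    norm_num
    rw [A (u 0) (u 1)]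
    module

lemma phi_mul_g2 (hE : ee * (1 - d1*d2) = 1) (q : MvPolynomial (Fin 2) R) : Φ (q * G₂) = 0 := by
  have B := relB a1 b1 c1 d1 a2 b2 c2 d2 ee hE
  induction q using MvPolynomial.induction_on' with
  | add p q hp hq => rw [add_mul, map_add, hp, hq, add_zero]
  | monomial u c =>
    rw [mono_mul_g2, map_sub, map_add, map_add, map_add,
      phi_monomial, phi_monomial, phi_monomial, phi_monomial, phi_monomial]
    simp only [Finsupp.add_apply, Finsupp.single_apply]
    norm_num
    rw [B (u 0) (u 1)]
    module

local notation "Iid" => Ideal.span {G₁, G₂}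
local notation "Qt" => MvPolynomial (Fin 2) R ⧸ (Ideal.span {G₁, G₂} : Ideal (MvPolynomial (Fin 2) R))
local notation "mkQ" => Ideal.Quotient.mk (Ideal.span {G₁, G₂} : Ideal (MvPolynomial (Fin 2) R))

lemma phi_ideal (hE : ee * (1 - d1*d2) = 1) (p : MvPolynomial (Fin 2) R) (hp : p ∈ Iid) : Φ p = 0 := by
  obtain ⟨q1, q2, rfl⟩ := Ideal.mem_span_pair.mp hp
  rw [map_add, phi_mul_g1, phi_mul_g2 _ _ _ _ _ _ _ _ _ hE, add_zero]

def psi : (Fin 4 → R) →ₗ[R] (MvPolynomial (Fin 2) R ⧸ (Ideal.span {G₁, G₂} : Ideal (MvPolynomial (Fin 2) R))) :=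
  (Pi.basisFun R (Fin 4)).constr R
    ![1, Ideal.Quotient.mk _ (X 0), Ideal.Quotient.mk _ (X 1),
      Ideal.Quotient.mk _ (X 0) * Ideal.Quotient.mk _ (X 1)]

local notation "Ψ" => psi a1 b1 c1 d1 a2 b2 c2 d2

lemma psi_apply (x : Fin 4 → R) :
    Ψ x = x 0 • 1 + x 1 • mkQ (X 0) + x 2 • mkQ (X 1) + x 3 • (mkQ (X 0) * mkQ (X 1)) := by
  rw [psi, Module.Basis.constr_apply_fintype]
  simp [Fin.sum_univ_four, Pi.basisFun_equivFun]

lemma hg1q : mkQ G₁ = 0 :=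
  Ideal.Quotient.eq_zero_iff_mem.2 (Ideal.subset_span (by simp))

lemma hg2q : mkQ G₂ = 0 :=
  Ideal.Quotient.eq_zero_iff_mem.2 (Ideal.subset_span (by simp))

lemma smul_mkq (r : R) (y : MvPolynomial (Fin 2) R ⧸ (Ideal.span {G₁, G₂} : Ideal (MvPolynomial (Fin 2) R))) :
    r • y = mkQ (C r) * y := by
  obtain ⟨p, rfl⟩ := Ideal.Quotient.mk_surjective y
  rw [show r • (mkQ p) = mkQ (r • p) from rfl, MvPolynomial.smul_eq_C_mul, map_mul]

lemma h1q : mkQ (C a1) + mkQ (C b1) * mkQ (X 0) + mkQ (C c1) * mkQ (X 1) +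
    mkQ (C d1) * (mkQ (X 0) * mkQ (X 1)) - (mkQ (X 0))^2 = 0 := by
  have h := hg1q a1 b1 c1 d1 a2 b2 c2 d2
  conv_lhs at h => arg 2; rw [gone]
  simpa [ map_add, map_sub, map_mul, map_pow] using h

lemma h2q : mkQ (C a2) + mkQ (C b2) * mkQ (X 0) + mkQ (C c2) * mkQ (X 1) +
    mkQ (C d2) * (mkQ (X 0) * mkQ (X 1)) - (mkQ (X 1))^2 = 0 := by
  have h := hg2q a1 b1 c1 d1 a2 b2 c2 d2
  conv_lhs at h => arg 2; rw [gtwo]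
  simpa [ map_add, map_sub, map_mul, map_pow] using h

lemma psi_vrec (hE : ee * (1 - d1*d2) = 1) (m n : ℕ) :
    Ψ (V m n) = mkQ (X 0) ^ m * mkQ (X 1) ^ n := by
  have A := relA a1 b1 c1 d1 a2 b2 c2 d2 ee
  have h1 := h1q a1 b1 c1 d1 a2 b2 c2 d2
  have h2 := h2q a1 b1 c1 d1 a2 b2 c2 d2
  have hE' : mkQ (C ee) * (1 - mkQ (C d1) * mkQ (C d2)) = 1 := by
    have h := congrArg (algebraMap R (MvPolynomial (Fin 2) R ⧸
      (Ideal.span {G₁, G₂} : Ideal (MvPolynomial (Fin 2) R)))) hE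
    have hc : ∀ r : R, mkQ (C r) = algebraMap R _ r := fun r => by
      rw [← MvPolynomial.algebraMap_eq, Ideal.Quotient.mk_algebraMap]
    simpa [map_mul, map_sub, map_one, hc] using h
  induction m, n using vrec.induct with
  | case1 => rw [show V 0 0 = Pi.single 0 1 from by rw [vrec], psi_apply]; simp
  | case2 => rw [show V 1 0 = Pi.single 1 1 from by rw [vrec], psi_apply]; simp
  | case3 => rw [show V 0 1 = Pi.single 2 1 from by rw [vrec], psi_apply]; simp
  | case4 => rw [show V 1 1 = Pi.single 3 1 from by rw [vrec], psi_apply]; simp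
  | case5 n ih0 ih1 ih2 ih3 =>
    show Ψ (V 0 (n+2)) = _ ^ 0 * _ ^ (n+2)
    rw [show V 0 (n+2) = a2 • V 0 n + b2 • V 1 n + c2 • V 0 (n+1) + d2 • V 1 (n+1) from by
      rw [vrec]]
    simp only [map_add, map_smul, ih0, ih1, ih2, ih3, smul_mkq]
    linear_combination (mkQ (X 1) ^ n) * h2
  | case6 n ih0 ih1 ih2 ih3 ih4 =>
    show Ψ (V 1 (n+2)) = _ ^ 1 * _ ^ (n+2)
    conv_lhs => rw [vrec]
    simp only [map_add, map_smul, ih0, ih1, ih2, ih3, ih4, smul_mkq]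
    linear_combination (mkQ (C ee) * (mkQ (C b2) * mkQ (X 1)^n + mkQ (C d2) * mkQ (X 1)^(n+1))) * h1
      + (mkQ (C ee) * mkQ (X 0) * mkQ (X 1)^n) * h2
      + (mkQ (X 0) * mkQ (X 1)^(n+2)) * hE'
  | case7 m n ih0 ih1 ih2 ih3 =>
    show Ψ (V (m+2) n) = _ ^ (m+2) * _ ^ n
    rw [A m n]
    simp only [map_add, map_smul, ih0, ih1, ih2, ih3, smul_mkq]
    linear_combination (mkQ (X 0) ^ m * mkQ (X 1) ^ n) * h1

lemma hv00 : V 0 0 = Pi.single 0 1 := by rw [vrec]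
lemma hv10 : V 1 0 = Pi.single 1 1 := by rw [vrec]
lemma hv01 : V 0 1 = Pi.single 2 1 := by rw [vrec]
lemma hv11 : V 1 1 = Pi.single 3 1 := by rw [vrec]

lemma psi_inj (hE : ee * (1 - d1*d2) = 1) : Function.Injective Ψ := by
  rw [← LinearMap.ker_eq_bot, LinearMap.ker_eq_bot']
  intro x hx
  set p : MvPolynomial (Fin 2) R :=
    C (x 0) + C (x 1) * X 0 + C (x 2) * X 1 + C (x 3) * (X 0 * X 1) with hpdef
  have hmk : mkQ p = Ψ x := by
    rw [psi_apply, smul_mkq, smul_mkq, smul_mkq, smul_mkq, hpdef]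
    simp [map_add, map_mul, mul_one]
  have hp : p ∈ Iid := by
    rw [← Ideal.Quotient.eq_zero_iff_mem, hmk, hx]
  have h0 := phi_ideal a1 b1 c1 d1 a2 b2 c2 d2 ee hE p hp
  have hφ : Φ p = x := by
    have e1 : (C (x 0) : MvPolynomial (Fin 2) R) = monomial 0 (x 0) := rfl
    have e2 : (C (x 1) * X 0 : MvPolynomial (Fin 2) R) =
        monomial (Finsupp.single 0 1) (x 1) := by
      rw [show (X 0 : MvPolynomial (Fin 2) R) = monomial (Finsupp.single 0 1) 1 from rfl,
        C_mul_monomial, mul_one]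
    have e3 : (C (x 2) * X 1 : MvPolynomial (Fin 2) R) =
        monomial (Finsupp.single 1 1) (x 2) := by
      rw [show (X 1 : MvPolynomial (Fin 2) R) = monomial (Finsupp.single 1 1) 1 from rfl,
        C_mul_monomial, mul_one]
    have e4 : (C (x 3) * (X 0 * X 1) : MvPolynomial (Fin 2) R) =
        monomial (Finsupp.single 0 1 + Finsupp.single 1 1) (x 3) := by
      rw [show (X 0 * X 1 : MvPolynomial (Fin 2) R) =
        monomial (Finsupp.single 0 1 + Finsupp.single 1 1) 1 from by
          rw [show (X 0 : MvPolynomial (Fin 2) R) = monomial (Finsupp.single 0 1) 1 from rfl,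
            show (X 1 : MvPolynomial (Fin 2) R) = monomial (Finsupp.single 1 1) 1 from rfl,
            monomial_mul, mul_one],
        C_mul_monomial, mul_one]
    rw [hpdef, map_add, map_add, map_add, e1, e2, e3, e4,
      phi_monomial, phi_monomial, phi_monomial, phi_monomial]
    simp only [Finsupp.add_apply, Finsupp.single_apply, Finsupp.coe_zero, Pi.zero_apply]
    norm_num
    rw [hv00, hv10, hv01, hv11]
    funext i
    fin_cases i <;> simp
  rw [← hφ, h0]

lemma psi_surj (hE : ee * (1 - d1*d2) = 1) : Function.Surjective Ψ := by
  intro y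
  obtain ⟨p, rfl⟩ := Ideal.Quotient.mk_surjective y
  suffices h : mkQ p ∈ LinearMap.range Ψ from h
  induction p using MvPolynomial.induction_on' with
  | add p q hp hq => rw [map_add]; exact Submodule.add_mem _ hp hq
  | monomial u c =>
    have hmono : (monomial u c : MvPolynomial (Fin 2) R) = C c * (X 0 ^ (u 0) * X 1 ^ (u 1)) := by
      rw [monomial_eq, Finsupp.prod_fintype _ _ (by simp), Fin.prod_univ_two]
    refine ⟨c • V (u 0) (u 1), ?_⟩
    rw [map_smul, psi_vrec a1 b1 c1 d1 a2 b2 c2 d2 ee hE, hmono, map_mul, map_mul,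
      map_pow, map_pow, smul_mkq]

def eqv (hE : ee * (1 - d1*d2) = 1) :
    (Fin 4 → R) ≃ₗ[R] (MvPolynomial (Fin 2) R ⧸ (Ideal.span {G₁, G₂} : Ideal (MvPolynomial (Fin 2) R))) :=
  LinearEquiv.ofBijective Ψ
    ⟨psi_inj a1 b1 c1 d1 a2 b2 c2 d2 ee hE, psi_surj a1 b1 c1 d1 a2 b2 c2 d2 ee hE⟩

def bas (hE : ee * (1 - d1*d2) = 1) :
    Module.Basis (Fin 4) R (MvPolynomial (Fin 2) R ⧸ (Ideal.span {G₁, G₂} : Ideal (MvPolynomial (Fin 2) R))) :=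
  (Pi.basisFun R (Fin 4)).map (eqv a1 b1 c1 d1 a2 b2 c2 d2 ee hE)

local notation "Bas" => bas a1 b1 c1 d1 a2 b2 c2 d2 ee

variable {a1 b1 c1 d1 a2 b2 c2 d2 ee}

lemma bas_apply (hE : ee * (1 - d1*d2) = 1) :
    ⇑(Bas hE) = ![1, mkQ (X 0), mkQ (X 1), mkQ (X 0) * mkQ (X 1)] := by
  funext i
  rw [bas, Module.Basis.map_apply, Pi.basisFun_apply]
  rw [show (eqv a1 b1 c1 d1 a2 b2 c2 d2 ee hE) (Pi.single i 1) = Ψ (Pi.single i 1) from rfl,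
    psi_apply]
  fin_cases i <;> simp

lemma repr_psi (hE : ee * (1 - d1*d2) = 1) (w : Fin 4 → R) (i : Fin 4) :
    (Bas hE).repr (Ψ w) i = w i := by
  rw [bas, Module.Basis.map_repr]
  have hsymm : (eqv a1 b1 c1 d1 a2 b2 c2 d2 ee hE).symm (Ψ w) = w := by
    rw [LinearEquiv.symm_apply_eq]
    rfl
  simp only [LinearEquiv.trans_apply, hsymm, Pi.basisFun_repr]

lemma coord3_pow (hE : ee * (1 - d1*d2) = 1) (m n : ℕ) :
    (Bas hE).coord 3 (mkQ (X 0) ^ m * mkQ (X 1) ^ n) = V m n 3 := by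
  rw [← psi_vrec a1 b1 c1 d1 a2 b2 c2 d2 ee hE m n, Module.Basis.coord_apply, repr_psi]

lemma gramEntry (hE : ee * (1 - d1*d2) = 1) (m n : ℕ)
    (x : MvPolynomial (Fin 2) R ⧸ (Ideal.span {G₁, G₂} : Ideal (MvPolynomial (Fin 2) R)))
    (hx : x = mkQ (X 0) ^ m * mkQ (X 1) ^ n) :
    (Bas hE).coord 3 x = V m n 3 := by
  rw [hx, coord3_pow hE]

lemma v003 : V 0 0 3 = 0 := by rw [hv00]; simp
lemma v103 : V 1 0 3 = 0 := by rw [hv10]; simp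
lemma v013 : V 0 1 3 = 0 := by rw [hv01]; simp
lemma v113 : V 1 1 3 = 1 := by rw [hv11]; simp

lemma v203 : V 2 0 3 = d1 := by
  rw [relA a1 b1 c1 d1 a2 b2 c2 d2 ee 0 0]
  simp only [zero_add, Pi.add_apply, Pi.smul_apply, smul_eq_mul, hv00, hv10, hv01, hv11]
  simp

lemma v023 (hE : ee * (1 - d1*d2) = 1) : V 0 2 3 = d2 := by
  rw [relB a1 b1 c1 d1 a2 b2 c2 d2 ee hE 0 0]
  simp only [zero_add, Pi.add_apply, Pi.smul_apply, smul_eq_mul, hv00, hv10, hv01, hv11]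
  simp

lemma gram_eq (hE : ee * (1 - d1*d2) = 1) :
    (Matrix.of fun i j : Fin 4 => (Bas hE).coord 3 ((Bas hE) i * (Bas hE) j)) =
      !![V 0 0 3, V 1 0 3, V 0 1 3, V 1 1 3;
         V 1 0 3, V 2 0 3, V 1 1 3, V 2 1 3;
         V 0 1 3, V 1 1 3, V 0 2 3, V 1 2 3;
         V 1 1 3, V 2 1 3, V 1 2 3, V 2 2 3] := by
  ext i j
  rw [Matrix.of_apply, bas_apply hE]
  fin_cases i <;> fin_cases j <;>
    simp only [show (⟨0, by omega⟩ : Fin 4) = 0 from rfl, show (⟨1, by omega⟩ : Fin 4) = 1 from rfl,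
      show (⟨2, by omega⟩ : Fin 4) = 2 from rfl, show (⟨3, by omega⟩ : Fin 4) = 3 from rfl,
      Matrix.cons_val_zero, Matrix.cons_val_one, Matrix.head_cons, Matrix.cons_val_two,
      Matrix.tail_cons, Matrix.cons_val_three, Matrix.cons_val', Matrix.empty_val',
      Matrix.cons_val_fin_one, Matrix.head_fin_const, Matrix.of_apply, Matrix.cons_val_succ]
  · exact gramEntry hE 0 0 _ (by ring)
  · exact gramEntry hE 1 0 _ (by ring)
  · exact gramEntry hE 0 1 _ (by ring)
  · exact gramEntry hE 1 1 _ (by ring)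
  · exact gramEntry hE 1 0 _ (by ring)
  · exact gramEntry hE 2 0 _ (by ring)
  · exact gramEntry hE 1 1 _ (by ring)
  · exact gramEntry hE 2 1 _ (by ring)
  · exact gramEntry hE 0 1 _ (by ring)
  · exact gramEntry hE 1 1 _ (by ring)
  · exact gramEntry hE 0 2 _ (by ring)
  · exact gramEntry hE 1 2 _ (by ring)
  · exact gramEntry hE 1 1 _ (by ring)
  · exact gramEntry hE 2 1 _ (by ring)
  · exact gramEntry hE 1 2 _ (by ring)
  · exact gramEntry hE 2 2 _ (by ring)

lemma gram_det (hE : ee * (1 - d1*d2) = 1) :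
    (Matrix.of fun i j : Fin 4 => (Bas hE).coord 3 ((Bas hE) i * (Bas hE) j)).det =
      1 - d1 * d2 := by
  rw [gram_eq hE, v003, v103, v013, v113, v203, v023 hE]
  simp [Matrix.det_succ_row_zero, Fin.sum_univ_succ,
    show (Fin.succAbove 3 2 : Fin 4) = 2 from rfl]
  ring

lemma frob (hE : ee * (1 - d1*d2) = 1) :
    ∃ l : (MvPolynomial (Fin 2) R ⧸ (Ideal.span {G₁, G₂} : Ideal (MvPolynomial (Fin 2) R))) →ₗ[R] R,
      Function.Bijective fun s : (MvPolynomial (Fin 2) R ⧸ (Ideal.span {G₁, G₂} : Ideal (MvPolynomial (Fin 2) R))) =>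
        l ∘ₗ LinearMap.mul R _ s := by
  classical
  set Q := MvPolynomial (Fin 2) R ⧸ (Ideal.span {G₁, G₂} : Ideal (MvPolynomial (Fin 2) R))
  set b := Bas hE with hbdef
  set l : Q →ₗ[R] R := b.coord 3 with hldef
  set T : Q →ₗ[R] (Q →ₗ[R] R) :=
    (LinearMap.llcomp R Q Q R l).comp (LinearMap.mul R Q) with hTdef
  have hmat : LinearMap.toMatrix b b.dualBasis T =
      Matrix.of fun i j : Fin 4 => b.coord 3 (b i * b j) := by
    ext i j
    rw [LinearMap.toMatrix_apply, Module.Basis.dualBasis_repr, Matrix.of_apply]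
    show l (b j * b i) = b.coord 3 (b i * b j)
    rw [mul_comm]
  have hdet : IsUnit (LinearMap.toMatrix b b.dualBasis T).det := by
    rw [hmat, gram_det hE]
    exact IsUnit.of_mul_eq_one ee (by linear_combination hE)
  refine ⟨l, ?_⟩
  have heq : (fun s : Q => l ∘ₗ LinearMap.mul R Q s) =
      fun s => (LinearEquiv.ofIsUnitDet hdet) s := by
    funext s
    rw [LinearEquiv.ofIsUnitDet_apply]
    rfl
  rw [heq]
  exact (LinearEquiv.ofIsUnitDet hdet).bijective

theorem generic_main (hE : ee * (1 - d1*d2) = 1) :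
    ∃ b : Module.Basis (Fin 4) R (MvPolynomial (Fin 2) R ⧸ (Ideal.span {G₁, G₂} : Ideal (MvPolynomial (Fin 2) R))),
      ⇑b = ![1, mkQ (X 0), mkQ (X 1), mkQ (X 0) * mkQ (X 1)] ∧
      (Matrix.of fun i j : Fin 4 => b.coord 3 (b i * b j)).det = 1 - d1 * d2 ∧
      ∃ l : (MvPolynomial (Fin 2) R ⧸ (Ideal.span {G₁, G₂} : Ideal (MvPolynomial (Fin 2) R))) →ₗ[R] R,
        Function.Bijective fun s : (MvPolynomial (Fin 2) R ⧸ (Ideal.span {G₁, G₂} : Ideal (MvPolynomial (Fin 2) R))) =>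
          l ∘ₗ LinearMap.mul R _ s :=
  ⟨Bas hE, bas_apply hE, gram_det hE, frob hE⟩

end DevHelper

/-- Let `R̃` be (any realization of) the localization of `ℤ[a₁,…,d₂]` away from
`f = 1 − d₁d₂`, and `S̃ = R̃[s,t]/(a₁ + b₁s + c₁t + d₁st − s², a₂ + b₂s + c₂t + d₂st − t²)`.
Then `S̃` is free of rank 4 over `R̃` with basis `(1, s, t, st)`; with `λ` the projection
onto the `st`-coordinate, the Gram matrix `(λ(eᵢeⱼ))` has determinant the image of
`1 − d₁d₂`, which is invertible in `R̃`; hence `S̃/R̃` is relative Frobenius of rank 4: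
`Hom_{R̃}(S̃,R̃)` has an `S̃`-module generator `l`. -/
theorem universal_relative_frobenius [IsLocalization.Away fElt Rt] :
    ∃ b : Module.Basis (Fin 4) Rt (St Rt),
      ⇑b = ![1, Ideal.Quotient.mk (StIdeal Rt) (MvPolynomial.X 0),
            Ideal.Quotient.mk (StIdeal Rt) (MvPolynomial.X 1),
            Ideal.Quotient.mk (StIdeal Rt) (MvPolynomial.X 0) *
              Ideal.Quotient.mk (StIdeal Rt) (MvPolynomial.X 1)] ∧
      Matrix.det (Matrix.of fun i j : Fin 4 => b.coord 3 (b i * b j)) =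
        algebraMap ZPoly Rt (1 - MvPolynomial.X 3 * MvPolynomial.X 7) ∧
      IsUnit (algebraMap ZPoly Rt (1 - MvPolynomial.X 3 * MvPolynomial.X 7)) ∧
      ∃ l : St Rt →ₗ[Rt] Rt,
        Function.Bijective fun s : St Rt => l ∘ₗ LinearMap.mul Rt (St Rt) s := by
  have hU : IsUnit (algebraMap ZPoly Rt fElt) := IsLocalization.Away.algebraMap_isUnit fElt
  have himg : algebraMap ZPoly Rt fElt =
      1 - algebraMap ZPoly Rt (MvPolynomial.X 3) * algebraMap ZPoly Rt (MvPolynomial.X 7) := by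
    rw [map_sub, map_one, map_mul]
  obtain ⟨u, hu⟩ := hU
  have hee : (↑u⁻¹ : Rt) *
      (1 - algebraMap ZPoly Rt (MvPolynomial.X 3) * algebraMap ZPoly Rt (MvPolynomial.X 7)) = 1 := by
    rw [← himg, ← hu]; exact u.inv_mul
  obtain ⟨b, hb, hdet, hfrob⟩ :=
    generic_main (a1 := algebraMap ZPoly Rt (MvPolynomial.X 0))
      (b1 := algebraMap ZPoly Rt (MvPolynomial.X 1))
      (c1 := algebraMap ZPoly Rt (MvPolynomial.X 2))
      (d1 := algebraMap ZPoly Rt (MvPolynomial.X 3))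
      (a2 := algebraMap ZPoly Rt (MvPolynomial.X 4))
      (b2 := algebraMap ZPoly Rt (MvPolynomial.X 5))
      (c2 := algebraMap ZPoly Rt (MvPolynomial.X 6))
      (d2 := algebraMap ZPoly Rt (MvPolynomial.X 7))
      (ee := (↑u⁻¹ : Rt)) hee
  refine ⟨b, hb, ?_, ?_, hfrob⟩
  · rw [map_sub, map_one, map_mul]; exact hdet
  · exact ⟨u, hu⟩

end
end

section
/- Let (R, m) be a local ring with residue field k, and let R → R̄ be a faithfully flat map to a local ring R̄ whose residue field is the algebraic closure of k. Let ι : A ↪ B be an injection of finitely generated R-modules with B projective. If ι ⊗_R R̄ : A ⊗ R̄ → B ⊗ R̄ is a split monomorphism, then ι is a split monomorphism. -/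
set_option synthInstance.maxHeartbeats 1000000
set_option maxHeartbeats 1000000

open scoped TensorProduct

/-- Let `(R, m)` be a local ring and `R → R̄` a faithfully flat local map to a local ring
`R̄` whose residue field is the algebraic closure of the residue field `k` of `R` (we
record that it is algebraically closed and algebraic over `k`).  Let `ι : A ↪ B` be an
injection of finitely generated `R`-modules with `B` projective.  If
`ι ⊗_R R̄ : A ⊗ R̄ → B ⊗ R̄` is a split monomorphism, then `ι` is a split monomorphism. -/
theorem split_descends_along_residue_closure
    (R : Type*) [CommRing R] [IsLocalRing R]
    (Rbar : Type*) [CommRing Rbar] [IsLocalRing Rbar] [Algebra R Rbar]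
    [Module.FaithfullyFlat R Rbar]
    [IsLocalHom (algebraMap R Rbar)]
    (halgclosed : IsAlgClosed (IsLocalRing.ResidueField Rbar))
    (halgebraic : ∀ x : IsLocalRing.ResidueField Rbar,
      ∃ p : Polynomial (IsLocalRing.ResidueField R), p ≠ 0 ∧
        Polynomial.eval₂ (IsLocalRing.ResidueField.map (algebraMap R Rbar)) x p = 0)
    (A B : Type*) [AddCommGroup A] [Module R A] [AddCommGroup B] [Module R B]
    [Module.Finite R A] [Module.Finite R B] [Module.Projective R B]
    (ι : A →ₗ[R] B) (hinj : Function.Injective ι)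
    (hsplit : ∃ π : TensorProduct R Rbar B →ₗ[Rbar] TensorProduct R Rbar A,
      π ∘ₗ ι.baseChange Rbar = LinearMap.id) :
    ∃ π : B →ₗ[R] A, π ∘ₗ ι = LinearMap.id := by
  classical
  -- `B` is finite free over the local ring `R`
  have hfp : Module.FinitePresentation R B := Module.finitePresentation_of_projective R B
  have hfree : Module.Free R B := Module.free_of_flat_of_isLocalRing
  set k := IsLocalRing.ResidueField R
  set K := IsLocalRing.ResidueField Rbar
  haveI : IsScalarTower R Rbar K :=
    IsScalarTower.of_algebraMap_eq' (by
      ext r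
      show algebraMap R K r = IsLocalRing.residue Rbar (algebraMap R Rbar r)
      rw [show algebraMap R K r
            = IsLocalRing.ResidueField.map (algebraMap R Rbar) (IsLocalRing.residue R r) from rfl,
        IsLocalRing.ResidueField.map_residue])
  -- Step A : the double base change `(ι ⊗ R̄) ⊗ K` is injective
  obtain ⟨π, hπ⟩ := hsplit
  have h1 : (π.baseChange K) ∘ₗ (ι.baseChange Rbar).baseChange K = LinearMap.id := by
    rw [← LinearMap.baseChange_comp, hπ, LinearMap.baseChange_id]
  have injS : Function.Injective ((ι.baseChange Rbar).baseChange K) :=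
    Function.HasLeftInverse.injective ⟨π.baseChange K, fun x => by
      simpa using LinearMap.congr_fun h1 x⟩
  -- Step B : transport along `cancelBaseChange` to get injectivity of `ι ⊗ K`
  let eA := TensorProduct.AlgebraTensorModule.cancelBaseChange R Rbar K K A
  let eB := TensorProduct.AlgebraTensorModule.cancelBaseChange R Rbar K K B
  have hsq : eB.toLinearMap ∘ₗ ((ι.baseChange Rbar).baseChange K)
      = (ι.baseChange K) ∘ₗ eA.toLinearMap := by
    apply LinearMap.ext
    intro x
    induction x using TensorProduct.induction_on with
    | zero => simp
    | add u v hu hv => simp [map_add, hu, hv]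
    | tmul c y =>
      induction y using TensorProduct.induction_on with
      | zero => simp
      | add u v hu hv => simp [TensorProduct.tmul_add, map_add, hu, hv]
      | tmul s a => simp [eA, eB]
  have injK : Function.Injective (ι.baseChange K) := by
    have heq : (ι.baseChange K) = (eB.toLinearMap ∘ₗ ((ι.baseChange Rbar).baseChange K))
        ∘ₗ eA.symm.toLinearMap := by
      rw [hsq]; ext x; simp
    rw [heq]
    exact (eB.injective.comp injS).comp eA.symm.injective
  -- Step C : compare `(ι ⊗ k) ⊗ K` with `ι ⊗ K`
  let fA := TensorProduct.AlgebraTensorModule.cancelBaseChange R k K K A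
  let fB := TensorProduct.AlgebraTensorModule.cancelBaseChange R k K K B
  have hsq2 : fB.toLinearMap ∘ₗ ((ι.baseChange k).baseChange K)
      = (ι.baseChange K) ∘ₗ fA.toLinearMap := by
    apply LinearMap.ext
    intro x
    induction x using TensorProduct.induction_on with
    | zero => simp
    | add u v hu hv => simp [map_add, hu, hv]
    | tmul c y =>
      induction y using TensorProduct.induction_on with
      | zero => simp
      | add u v hu hv => simp [TensorProduct.tmul_add, map_add, hu, hv]
      | tmul s a => simp [fA, fB]
  have inj2 : Function.Injective ((ι.baseChange k).baseChange K) := by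
    have heq : ((ι.baseChange k).baseChange K)
        = fB.symm.toLinearMap ∘ₗ ((ι.baseChange K) ∘ₗ fA.toLinearMap) := by
      rw [← hsq2]
      ext x
      simp
    rw [heq]
    simp only [LinearMap.coe_comp]
    exact fB.symm.injective.comp (injK.comp fA.injective)
  -- Step D : descend injectivity from `K` to `k`
  have injk : Function.Injective (ι.baseChange k) := by
    have hker : ∀ z, ι.baseChange k z = 0 → z = 0 := by
      intro z hz
      have h0 : ((ι.baseChange k).baseChange K) ((1 : K) ⊗ₜ[k] z) = 0 := by
        simp [hz]
      have h1 : (1 : K) ⊗ₜ[k] z = 0 := by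
        apply inj2
        simpa using h0
      have hj : Function.Injective (Algebra.linearMap k K) := by
        exact (algebraMap k K).injective
      have h2 : Function.Injective ((Algebra.linearMap k K).rTensor (k ⊗[R] A)) :=
        Module.Flat.rTensor_preserves_injective_linearMap _ hj
      have h3 : ((Algebra.linearMap k K).rTensor (k ⊗[R] A)) ((1 : k) ⊗ₜ[k] z) = 0 := by
        simpa using h1
      have h4 : (1 : k) ⊗ₜ[k] z = 0 := by
        apply h2; simpa using h3
      have := congrArg (TensorProduct.lid k (k ⊗[R] A)) h4
      simpa using this
    intro x y hxy
    have : ι.baseChange k (x - y) = 0 := by rw [map_sub, hxy, sub_self]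
    exact sub_eq_zero.mp (hker _ this)
  -- Step E : conclude via the local splitting criterion
  rw [IsLocalRing.split_injective_iff_lTensor_residueField_injective ι]
  rw [show ⇑(ι.lTensor k) = ⇑(ι.baseChange k) from (LinearMap.baseChange_eq_ltensor ι).symm]
  exact injk
end
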